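/- Let X be a Banach space and 2 ≤ q < ∞. Suppose there is a constant c > 0 such that for every probability space (Ω, 𝒜, μ) with an increasing filtration (𝒜_n)_{n≥1} and every strictly increasing sequence (a_n)_{n≥0} with a_0 = 0 and a_n → 1, one has ‖(∫₀^∞ ‖Σ_{k≥1} t b_k e^{−t b_k} dE_{k+1}(f)‖_X^q dt/t)^{1/q}‖_{L_q(Ω)} ≤ c · ‖f‖_{L_q(Ω; X)} for all f ∈ L_q(Ω; X), where b_k = −ln(1 − a_k). Then X is of martingale cotype q: there is a constant c' depending only on c such that for every probability space with increasing filtration (𝒜_n)_{n≥1} and every f ∈ L_q(Ω; X), Σ_{n≥1} E[‖dE_n(f)‖_X^q] ≤ (c')^q · E[‖f‖_X^q]. -/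

import Mathlib

open MeasureTheory Filter Set Topology ENNReal

universe u v

/-- `E_n(f)`: `X`-valued conditional expectation of `f` given `𝒜_n` for `n ≥ 1`, with
`E_0 = 0`. -/
noncomputable def condEv {Ω : Type*} {X : Type*} [NormedAddCommGroup X] [NormedSpace ℝ X]
    [CompleteSpace X] [m0 : MeasurableSpace Ω] (μ : Measure Ω)
    (F : ℕ → MeasurableSpace Ω) (f : Ω → X) (n : ℕ) : Ω → X :=
  if n = 0 then 0 else μ[f | F n]

/-- The `X`-valued martingale difference `dE_n(f) = E_n(f) - E_{n-1}(f)`. -/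
noncomputable def dEv {Ω : Type*} {X : Type*} [NormedAddCommGroup X] [NormedSpace ℝ X]
    [CompleteSpace X] [m0 : MeasurableSpace Ω] (μ : Measure Ω)
    (F : ℕ → MeasurableSpace Ω) (f : Ω → X) (n : ℕ) : Ω → X :=
  fun ω => condEv μ F f n ω - condEv μ F f (n - 1) ω

namespace Stmt18Aux



lemma sum_lintegral_le {α : Type*} [MeasurableSpace α] (μ : Measure α) (K : ℕ)
    (f : ℕ → α → ℝ≥0∞) :
    ∑ k ∈ Finset.range K, ∫⁻ x, f k x ∂μ ≤ ∫⁻ x, ∑ k ∈ Finset.range K, f k x ∂μ := by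
  induction K with
  | zero => simp
  | succ n ih =>
    simp_rw [Finset.sum_range_succ]
    exact (add_le_add ih le_rfl).trans (le_lintegral_add _ _)

lemma add_rpow_le {a b : ℝ≥0∞} {q : ℝ} (hq : 0 ≤ q) :
    (a + b) ^ q ≤ (2 : ℝ≥0∞) ^ q * (a ^ q + b ^ q) := by
  have h : a + b ≤ 2 * (a ⊔ b) := by
    rw [two_mul]; exact add_le_add le_sup_left le_sup_right
  calc (a + b) ^ q ≤ (2 * (a ⊔ b)) ^ q := ENNReal.rpow_le_rpow h hq
    _ = 2 ^ q * (a ⊔ b) ^ q := ENNReal.mul_rpow_of_nonneg _ _ hq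
    _ ≤ 2 ^ q * (a ^ q + b ^ q) := by
        gcongr
        rcases le_total a b with hab | hab
        · rw [sup_eq_right.mpr hab]; exact le_add_self
        · rw [sup_eq_left.mpr hab]; exact self_le_add_right _ _

lemma ofReal_norm_rpow {X : Type*} [NormedAddCommGroup X] (x : X) {q : ℝ} (hq : 0 ≤ q) :
    ENNReal.ofReal (‖x‖ ^ q) = (‖x‖₊ : ℝ≥0∞) ^ q := by
  rw [← enorm_eq_nnnorm, ← ofReal_norm_eq_enorm, ← ENNReal.ofReal_rpow_of_nonneg (norm_nonneg _) hq]

lemma phi_lower {s : ℝ} (h1 : 1 ≤ s) (h2 : s ≤ 2) : Real.exp (-2) ≤ s * Real.exp (-s) := by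
  have := Real.exp_pos (-s)
  nlinarith [Real.exp_le_exp.mpr (neg_le_neg h2)]

lemma phi_upper_small {R s : ℝ} (hR : 1 ≤ R) (hs0 : 0 ≤ s) (hs : s ≤ 2 / R) :
    s * Real.exp (-s) ≤ 27 / R := by
  have h1 : Real.exp (-s) ≤ 1 := Real.exp_le_one_iff.mpr (by linarith)
  have h2 : s * Real.exp (-s) ≤ s := by nlinarith [Real.exp_pos (-s)]
  have : (2 : ℝ) / R ≤ 27 / R := by gcongr <;> norm_num
  linarith

lemma phi_upper_large {R s : ℝ} (hR : 1 ≤ R) (hs : R ≤ s) : s * Real.exp (-s) ≤ 27 / R := by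
  have hs0 : 0 < s := by linarith
  have h3 : s / 3 ≤ Real.exp (s / 3) := by
    nlinarith [Real.add_one_le_exp (s / 3)]
  have hcube : s ^ 3 / 27 ≤ Real.exp s := by
    have : (s / 3) ^ 3 ≤ Real.exp (s / 3) ^ 3 := by
      apply pow_le_pow_left₀ (by positivity) h3
    calc s ^ 3 / 27 = (s / 3) ^ 3 := by ring
      _ ≤ Real.exp (s / 3) ^ 3 := this
      _ = Real.exp s := by
          rw [← Real.exp_nat_mul]
          norm_num
          ring_nf
  rw [Real.exp_neg]
  have hE := Real.exp_pos s
  rw [show s * (Real.exp s)⁻¹ = s / Real.exp s from rfl,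
    div_le_div_iff₀ hE (by linarith : (0:ℝ) < R)]
  nlinarith [sq_nonneg s, sq_nonneg (s - R)]



lemma interval_bound {X : Type*} [NormedAddCommGroup X] {q : ℝ} (hq1 : 1 ≤ q) {u : ℝ}
    (hu : 0 < u) {W : ℝ → X} {A γ : ℝ≥0∞} (hγ0 : γ ≠ 0) (hγt : γ ≠ ∞)
    (h : ∀ t ∈ Ioc u (2 * u), A ≤ γ * ENNReal.ofReal ‖W t‖) :
    A ^ q ≤ 2 * γ ^ q * ∫⁻ t in Ioc u (2 * u), ENNReal.ofReal (‖W t‖ ^ q / t) := by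
  have hq0 : (0:ℝ) ≤ q := by linarith
  set κ : ℝ≥0∞ := (A / γ) ^ q * ENNReal.ofReal (2 * u)⁻¹ with hκ
  have hlow : ∀ t ∈ Ioc u (2 * u), κ ≤ ENNReal.ofReal (‖W t‖ ^ q / t) := by
    intro t ht
    have ht0 : 0 < t := hu.trans ht.1
    rw [div_eq_mul_inv, ENNReal.ofReal_mul (by positivity)]
    apply mul_le_mul'
    · rw [← ENNReal.ofReal_rpow_of_nonneg (norm_nonneg _) hq0]
      apply ENNReal.rpow_le_rpow _ hq0
      exact ENNReal.div_le_of_le_mul' (h t ht)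
    · exact ENNReal.ofReal_le_ofReal (by
        apply inv_anti₀ ht0 ht.2)
  have hint : κ * ENNReal.ofReal u ≤ ∫⁻ t in Ioc u (2 * u), ENNReal.ofReal (‖W t‖ ^ q / t) := by
    calc κ * ENNReal.ofReal u = κ * volume (Ioc u (2 * u)) := by
          rw [Real.volume_Ioc, show 2 * u - u = u by ring]
      _ = ∫⁻ _ in Ioc u (2 * u), κ := (setLIntegral_const _ _).symm
      _ ≤ _ := setLIntegral_mono' measurableSet_Ioc hlow
  have hkey : (A / γ) ^ q ≤ 2 * ∫⁻ t in Ioc u (2 * u), ENNReal.ofReal (‖W t‖ ^ q / t) := by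
    have h2 : κ * ENNReal.ofReal u = (A / γ) ^ q * ENNReal.ofReal 2⁻¹ := by
      rw [hκ, mul_assoc, ← ENNReal.ofReal_mul (by positivity)]
      rw [show (2 * u)⁻¹ * u = 2⁻¹ by
        field_simp]
    have h3 : (A / γ) ^ q = (κ * ENNReal.ofReal u) * 2 := by
      rw [h2, mul_assoc, ← ENNReal.ofReal_ofNat 2, ← ENNReal.ofReal_mul (by norm_num)]
      norm_num
    rw [h3, mul_comm (2 : ℝ≥0∞)]
    exact mul_le_mul' hint le_rfl
  calc A ^ q = ((A / γ) * γ) ^ q := by rw [ENNReal.div_mul_cancel hγ0 hγt]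
    _ = (A / γ) ^ q * γ ^ q := ENNReal.mul_rpow_of_nonneg _ _ hq0
    _ ≤ (2 * ∫⁻ t in Ioc u (2 * u), ENNReal.ofReal (‖W t‖ ^ q / t)) * γ ^ q :=
        mul_le_mul' hkey le_rfl
    _ = 2 * γ ^ q * ∫⁻ t in Ioc u (2 * u), ENNReal.ofReal (‖W t‖ ^ q / t) := by ring

noncomputable def aseq (R : ℝ) (k : ℕ) : ℝ := if k = 0 then 0 else 1 - Real.exp (-(R ^ k))

lemma aseq_zero (R : ℝ) : aseq R 0 = 0 := by simp [aseq]

lemma neg_log_aseq {R : ℝ} (k : ℕ) (hk : k ≠ 0) :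
    -Real.log (1 - aseq R k) = R ^ k := by
  simp [aseq, hk, Real.log_exp]

lemma aseq_strictMono {R : ℝ} (hR : 1 < R) : StrictMono (aseq R) := by
  have hR0 : 0 < R := by linarith
  intro k l hkl
  have hl : l ≠ 0 := by omega
  rcases Nat.eq_zero_or_pos k with hk | hk
  · subst hk
    rw [aseq_zero, show aseq R l = 1 - Real.exp (-(R ^ l)) by
      simp only [aseq]; rw [if_neg hl]]
    have : Real.exp (-(R ^ l)) < 1 := by
      rw [Real.exp_lt_one_iff]
      have := pow_pos hR0 l
      linarith
    linarith
  · have hk' : ¬ k = 0 := by omega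
    show aseq R k < aseq R l
    simp only [aseq]
    rw [if_neg hk', if_neg hl]
    have : Real.exp (-(R ^ l)) < Real.exp (-(R ^ k)) := by
      rw [Real.exp_lt_exp]
      have := pow_lt_pow_right₀ hR hkl
      linarith
    linarith

lemma aseq_tendsto {R : ℝ} (hR : 1 < R) : Tendsto (aseq R) atTop (𝓝 (1 : ℝ)) := by
  have h1 : Tendsto (fun k : ℕ => R ^ k) atTop atTop :=
    tendsto_pow_atTop_atTop_of_one_lt hR
  have h2 : Tendsto (fun k : ℕ => Real.exp (-(R ^ k))) atTop (𝓝 0) :=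
    Real.tendsto_exp_atBot.comp (tendsto_neg_atTop_atBot.comp h1)
  have h3 : Tendsto (fun k : ℕ => 1 - Real.exp (-(R ^ k))) atTop (𝓝 (1 - 0)) :=
    tendsto_const_nhds.sub h2
  rw [sub_zero] at h3
  apply h3.congr'
  filter_upwards [Filter.eventually_ge_atTop 1] with k hk
  simp only [aseq]
  rw [if_neg (show ¬ k = 0 by omega)]



lemma rpow_collapse {q : ℝ} (hq : 0 < q) (x : ℝ≥0∞) : (x ^ (1 / q)) ^ q = x := by
  rw [← ENNReal.rpow_mul, one_div, inv_mul_cancel₀ hq.ne', ENNReal.rpow_one]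

lemma ofReal_norm_rpow' {X : Type*} [NormedAddCommGroup X] (x : X) {q : ℝ} (hq : 0 ≤ q) :
    ENNReal.ofReal (‖x‖ ^ q) = ENNReal.ofReal ‖x‖ ^ q := by
  rw [← ENNReal.ofReal_rpow_of_nonneg (norm_nonneg _) hq]

lemma eLpNorm_rpow_q {α : Type*} [MeasurableSpace α] (μ : Measure α) {X : Type*}
    [NormedAddCommGroup X] {q : ℝ} (hq : 0 < q) (f : α → X) :
    (eLpNorm f (ENNReal.ofReal q) μ) ^ q = ∫⁻ ω, ENNReal.ofReal (‖f ω‖ ^ q) ∂μ := by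
  rw [eLpNorm_eq_lintegral_rpow_enorm_toReal (ENNReal.ofReal_pos.mpr hq).ne' ENNReal.ofReal_ne_top,
    ENNReal.toReal_ofReal hq.le, rpow_collapse hq]
  refine lintegral_congr fun x => ?_
  rw [ofReal_norm_rpow' _ hq.le, ofReal_norm_eq_enorm]

lemma sum_Ioc_lintegral_le {R : ℝ} (hR : 2 ≤ R) (K : ℕ) (g : ℝ → ℝ≥0∞) :
    ∑ k ∈ Finset.range K, ∫⁻ t in Ioc ((R ^ (k + 1))⁻¹) (2 * (R ^ (k + 1))⁻¹), g t ≤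
      ∫⁻ t in Ioi (0 : ℝ), g t := by
  have hR0 : (0 : ℝ) < R := by linarith
  have hR1 : (1 : ℝ) ≤ R := by linarith
  set S : ℕ → Set ℝ := fun k => Ioc ((R ^ (k + 1))⁻¹) (2 * (R ^ (k + 1))⁻¹) with hS
  have main : ∀ a b : ℕ, a < b → Disjoint (S a) (S b) := by
    intro a b hab
    have h1 : 2 * R ^ (a + 1) ≤ R ^ (b + 1) := by
      calc 2 * R ^ (a + 1) ≤ R * R ^ (a + 1) := by
            apply mul_le_mul_of_nonneg_right hR (by positivity)
        _ = R ^ (a + 2) := by ring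
        _ ≤ R ^ (b + 1) := pow_le_pow_right₀ hR1 (by omega)
    have key : 2 * (R ^ (b + 1))⁻¹ ≤ (R ^ (a + 1))⁻¹ := by
      have h2 : (R ^ (b + 1))⁻¹ ≤ (2 * R ^ (a + 1))⁻¹ := inv_anti₀ (by positivity) h1
      calc 2 * (R ^ (b + 1))⁻¹ ≤ 2 * (2 * R ^ (a + 1))⁻¹ := by
            exact mul_le_mul_of_nonneg_left h2 (by norm_num)
        _ = (R ^ (a + 1))⁻¹ := by
            rw [mul_inv]
            ring
    rw [hS, Set.Ioc_disjoint_Ioc]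
    exact le_trans (min_le_right _ _) (le_trans key (le_max_left _ _))
  have hdisj : Set.PairwiseDisjoint (↑(Finset.range K)) S := by
    intro i _ j _ hij
    rcases lt_or_gt_of_ne hij with h | h
    · exact main i j h
    · exact (main j i h).symm
  calc ∑ k ∈ Finset.range K, ∫⁻ t in S k, g t
      = ∫⁻ t in ⋃ k ∈ Finset.range K, S k, g t :=
        (lintegral_biUnion_finset hdisj (fun _ _ => measurableSet_Ioc) g).symm
    _ ≤ ∫⁻ t in Ioi (0 : ℝ), g t := by
        apply lintegral_mono_set
        intro t ht
        simp only [mem_iUnion, exists_prop] at ht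
        obtain ⟨k, _, ht⟩ := ht
        exact mem_Ioi.mpr (lt_trans (by positivity) ht.1)

end Stmt18Aux

open Stmt18Aux

lemma key_single {X : Type u} [NormedAddCommGroup X] [NormedSpace ℝ X] [CompleteSpace X]
    {q c : ℝ} (hq : 2 ≤ q) (hc : 0 < c)
    {Ω : Type v} {m0 : MeasurableSpace Ω} {μ : Measure Ω} [IsProbabilityMeasure μ]
    (G : ℕ → MeasurableSpace Ω) (f : Ω → X)
    (HH : (∫⁻ ω, ((∫⁻ t in Ioi (0 : ℝ), ENNReal.ofReal
            (‖∑' k : ℕ, (t * (-Real.log (1 - aseq 2 (k + 1))) *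
              Real.exp (-(t * (-Real.log (1 - aseq 2 (k + 1)))))) • dEv μ G f (k + 2) ω‖ ^ q / t))
            ^ (1 / q)) ^ q ∂μ) ^ (1 / q) ≤
          ENNReal.ofReal c * eLpNorm f (ENNReal.ofReal q) μ)
    (hstop : ∀ k : ℕ, 1 ≤ k → ∀ ω, dEv μ G f (k + 2) ω = 0) :
    ∫⁻ ω, ENNReal.ofReal (‖dEv μ G f 2 ω‖ ^ q) ∂μ ≤
      2 * ENNReal.ofReal (Real.exp 2) ^ q * ENNReal.ofReal c ^ q *
        ∫⁻ ω, ENNReal.ofReal (‖f ω‖ ^ q) ∂μ := by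
  have hq0 : (0 : ℝ) < q := by linarith
  have hq1 : (1 : ℝ) ≤ q := by linarith
  set γ : ℝ≥0∞ := ENNReal.ofReal (Real.exp 2) with hγ
  have hγ0 : γ ≠ 0 := (ENNReal.ofReal_pos.mpr (Real.exp_pos 2)).ne'
  have hγt : γ ≠ ∞ := ENNReal.ofReal_ne_top
  -- rewrite the tsum as a single term
  have hW : ∀ (ω : Ω) (t : ℝ),
      (∑' k : ℕ, (t * (-Real.log (1 - aseq 2 (k + 1))) *
        Real.exp (-(t * (-Real.log (1 - aseq 2 (k + 1)))))) • dEv μ G f (k + 2) ω)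
      = (t * 2 * Real.exp (-(t * 2))) • dEv μ G f 2 ω := by
    intro ω t
    rw [tsum_eq_single 0 (fun b hb => by rw [hstop b (by omega) ω, smul_zero])]
    have h2 : -Real.log (1 - aseq 2 (0 + 1)) = (2 : ℝ) := by
      rw [neg_log_aseq _ (by norm_num)]; norm_num
    rw [h2]
  simp only [hW] at HH
  have hcol : ∀ x : ℝ≥0∞, (x ^ (1 / q)) ^ q = x := rpow_collapse hq0
  simp only [hcol] at HH
  have HH2 : (∫⁻ ω, (∫⁻ t in Ioi (0 : ℝ), ENNReal.ofReal
      (‖(t * 2 * Real.exp (-(t * 2))) • dEv μ G f 2 ω‖ ^ q / t)) ∂μ)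
      ≤ (ENNReal.ofReal c * eLpNorm f (ENNReal.ofReal q) μ) ^ q := by
    have := ENNReal.rpow_le_rpow HH hq0.le
    rwa [hcol] at this
  -- pointwise lower bound
  have hpt : ∀ ω : Ω, ENNReal.ofReal (‖dEv μ G f 2 ω‖ ^ q) ≤
      2 * γ ^ q * ∫⁻ t in Ioi (0 : ℝ), ENNReal.ofReal
        (‖(t * 2 * Real.exp (-(t * 2))) • dEv μ G f 2 ω‖ ^ q / t) := by
    intro ω
    rw [ofReal_norm_rpow' _ hq0.le]
    calc ENNReal.ofReal ‖dEv μ G f 2 ω‖ ^ q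
        ≤ 2 * γ ^ q * ∫⁻ t in Ioc (2⁻¹ : ℝ) (2 * 2⁻¹), ENNReal.ofReal
            (‖(t * 2 * Real.exp (-(t * 2))) • dEv μ G f 2 ω‖ ^ q / t) := by
          apply interval_bound hq1 (by norm_num : (0:ℝ) < 2⁻¹) hγ0 hγt
          intro t ht
          obtain ⟨ht1, ht2⟩ := ht
          have hs1 : (1 : ℝ) ≤ t * 2 := by linarith
          have hs2 : t * 2 ≤ 2 := by linarith
          have hphi := phi_lower hs1 hs2
          have hexp : Real.exp 2 * Real.exp (-2) = 1 := by
            rw [← Real.exp_add]; norm_num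
          have hreal : ‖dEv μ G f 2 ω‖ ≤
              Real.exp 2 * ‖(t * 2 * Real.exp (-(t * 2))) • dEv μ G f 2 ω‖ := by
            rw [norm_smul, Real.norm_eq_abs, abs_of_nonneg (by positivity)]
            have h5 : Real.exp (-2) * ‖dEv μ G f 2 ω‖ ≤
                t * 2 * Real.exp (-(t * 2)) * ‖dEv μ G f 2 ω‖ :=
              mul_le_mul_of_nonneg_right hphi (norm_nonneg _)
            nlinarith [Real.exp_pos 2, norm_nonneg (dEv μ G f 2 ω)]
          calc ENNReal.ofReal ‖dEv μ G f 2 ω‖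
              ≤ ENNReal.ofReal (Real.exp 2 * ‖(t * 2 * Real.exp (-(t * 2))) • dEv μ G f 2 ω‖) :=
                ENNReal.ofReal_le_ofReal hreal
            _ = γ * ENNReal.ofReal ‖(t * 2 * Real.exp (-(t * 2))) • dEv μ G f 2 ω‖ := by
                rw [ENNReal.ofReal_mul (Real.exp_pos 2).le]
      _ ≤ 2 * γ ^ q * ∫⁻ t in Ioi (0 : ℝ), ENNReal.ofReal
            (‖(t * 2 * Real.exp (-(t * 2))) • dEv μ G f 2 ω‖ ^ q / t) := by
          gcongr
          intro t ht
          exact mem_Ioi.mpr (lt_trans (by norm_num) ht.1)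
  calc ∫⁻ ω, ENNReal.ofReal (‖dEv μ G f 2 ω‖ ^ q) ∂μ
      ≤ ∫⁻ ω, 2 * γ ^ q * (∫⁻ t in Ioi (0 : ℝ), ENNReal.ofReal
          (‖(t * 2 * Real.exp (-(t * 2))) • dEv μ G f 2 ω‖ ^ q / t)) ∂μ :=
        lintegral_mono hpt
    _ = 2 * γ ^ q * ∫⁻ ω, (∫⁻ t in Ioi (0 : ℝ), ENNReal.ofReal
          (‖(t * 2 * Real.exp (-(t * 2))) • dEv μ G f 2 ω‖ ^ q / t)) ∂μ := by
        rw [lintegral_const_mul' _ _ (ENNReal.mul_ne_top (by norm_num) (ENNReal.rpow_ne_top_of_nonneg hq0.le hγt))]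
    _ ≤ 2 * γ ^ q * (ENNReal.ofReal c * eLpNorm f (ENNReal.ofReal q) μ) ^ q := by
        exact mul_le_mul' le_rfl HH2
    _ = 2 * γ ^ q * ENNReal.ofReal c ^ q * ∫⁻ ω, ENNReal.ofReal (‖f ω‖ ^ q) ∂μ := by
        rw [ENNReal.mul_rpow_of_nonneg _ _ hq0.le, eLpNorm_rpow_q μ hq0 f]
        ring


lemma coeff_lower {R : ℝ} (hR : 1 < R) {k : ℕ} {t : ℝ}
    (ht1 : (R ^ (k + 1))⁻¹ < t) (ht2 : t ≤ 2 * (R ^ (k + 1))⁻¹) :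
    Real.exp (-2) ≤ t * R ^ (k + 1) * Real.exp (-(t * R ^ (k + 1))) := by
  have hp : (0 : ℝ) < R ^ (k + 1) := by positivity
  have h1 : 1 ≤ t * R ^ (k + 1) := by
    have := mul_lt_mul_of_pos_right ht1 hp
    rw [inv_mul_cancel₀ hp.ne'] at this
    linarith
  have h2 : t * R ^ (k + 1) ≤ 2 := by
    have := mul_le_mul_of_nonneg_right ht2 hp.le
    rw [mul_assoc, inv_mul_cancel₀ hp.ne', mul_one] at this
    linarith
  exact phi_lower h1 h2

lemma coeff_upper {R : ℝ} (hR : 1 < R) {k j : ℕ} (hjk : j ≠ k) {t : ℝ}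
    (ht1 : (R ^ (k + 1))⁻¹ < t) (ht2 : t ≤ 2 * (R ^ (k + 1))⁻¹) :
    t * R ^ (j + 1) * Real.exp (-(t * R ^ (j + 1))) ≤ 27 / R := by
  have hR0 : (0 : ℝ) < R := by linarith
  have hpk : (0 : ℝ) < R ^ (k + 1) := by positivity
  have hpj : (0 : ℝ) < R ^ (j + 1) := by positivity
  have ht0 : 0 < t := lt_trans (by positivity) ht1
  rcases lt_or_gt_of_ne hjk with h | h
  · apply phi_upper_small hR.le (by positivity)
    have hpow : R ^ (j + 1) * R ≤ R ^ (k + 1) := by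
      rw [← pow_succ]; exact pow_le_pow_right₀ hR.le (by omega)
    have hdiv : R ^ (j + 1) / R ^ (k + 1) ≤ 1 / R := by
      rw [div_le_div_iff₀ hpk hR0]; nlinarith
    calc t * R ^ (j + 1) ≤ 2 * (R ^ (k + 1))⁻¹ * R ^ (j + 1) :=
          mul_le_mul_of_nonneg_right ht2 hpj.le
      _ = 2 * (R ^ (j + 1) / R ^ (k + 1)) := by ring
      _ ≤ 2 * (1 / R) := by linarith
      _ = 2 / R := by ring
  · apply phi_upper_large hR.le
    have hpow : R * R ^ (k + 1) ≤ R ^ (j + 1) := by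
      rw [← pow_succ']; exact pow_le_pow_right₀ hR.le (by omega)
    have hdiv : R ≤ R ^ (j + 1) / R ^ (k + 1) := by
      rw [le_div_iff₀ hpk]; linarith
    calc R ≤ R ^ (j + 1) / R ^ (k + 1) := hdiv
      _ = (R ^ (k + 1))⁻¹ * R ^ (j + 1) := by ring
      _ ≤ t * R ^ (j + 1) := mul_le_mul_of_nonneg_right ht1.le hpj.le

lemma vec_bound {X : Type*} [NormedAddCommGroup X] [NormedSpace ℝ X] {K k : ℕ} (hk : k < K)
    (v : ℕ → X) (φ : ℕ → ℝ) (hφ0 : ∀ j, 0 ≤ φ j) (hφk : Real.exp (-2) ≤ φ k)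
    {ε : ℝ} (hε : 0 ≤ ε) (hφj : ∀ j, j ≠ k → φ j ≤ ε) :
    ‖v k‖ ≤ Real.exp 2 * ‖∑ j ∈ Finset.range K, φ j • v j‖
      + Real.exp 2 * ε * ∑ j ∈ Finset.range K, ‖v j‖ := by
  set W := ∑ j ∈ Finset.range K, φ j • v j with hWdef
  set S := ∑ j ∈ Finset.range K, ‖v j‖ with hSdef
  have hk' : k ∈ Finset.range K := Finset.mem_range.mpr hk
  have hsplit : φ k • v k = W - ∑ j ∈ (Finset.range K).erase k, φ j • v j := by
    rw [eq_sub_iff_add_eq, hWdef]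
    exact Finset.add_sum_erase _ (fun j => φ j • v j) hk'
  have h1 : ‖φ k • v k‖ ≤ ‖W‖ + ∑ j ∈ (Finset.range K).erase k, ‖φ j • v j‖ := by
    rw [hsplit]
    exact (norm_sub_le _ _).trans (by gcongr; exact norm_sum_le _ _)
  have h2 : ∑ j ∈ (Finset.range K).erase k, ‖φ j • v j‖ ≤ ε * S := by
    calc ∑ j ∈ (Finset.range K).erase k, ‖φ j • v j‖
        ≤ ∑ j ∈ (Finset.range K).erase k, ε * ‖v j‖ := by
          apply Finset.sum_le_sum
          intro j hj
          rw [norm_smul, Real.norm_eq_abs, abs_of_nonneg (hφ0 j)]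
          exact mul_le_mul_of_nonneg_right (hφj j (Finset.ne_of_mem_erase hj)) (norm_nonneg _)
      _ ≤ ∑ j ∈ Finset.range K, ε * ‖v j‖ :=
          Finset.sum_le_sum_of_subset_of_nonneg (Finset.erase_subset _ _)
            (fun j _ _ => by positivity)
      _ = ε * S := by rw [hSdef, Finset.mul_sum]
  have h3 : Real.exp (-2) * ‖v k‖ ≤ ‖φ k • v k‖ := by
    rw [norm_smul, Real.norm_eq_abs, abs_of_nonneg (hφ0 k)]
    exact mul_le_mul_of_nonneg_right hφk (norm_nonneg _)
  have hexp : Real.exp 2 * Real.exp (-2) = 1 := by rw [← Real.exp_add]; norm_num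
  have h4 : Real.exp (-2) * ‖v k‖ ≤ ‖W‖ + ε * S := by linarith
  have h5 := mul_le_mul_of_nonneg_left h4 (Real.exp_pos 2).le
  calc ‖v k‖ = Real.exp 2 * (Real.exp (-2) * ‖v k‖) := by
        rw [← mul_assoc, hexp, one_mul]
    _ ≤ Real.exp 2 * (‖W‖ + ε * S) := h5
    _ = Real.exp 2 * ‖W‖ + Real.exp 2 * ε * S := by ring


lemma key_block {X : Type u} [NormedAddCommGroup X] [NormedSpace ℝ X] [CompleteSpace X]
    {q c : ℝ} (hq : 2 ≤ q) (hc : 0 < c)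
    {Ω : Type v} {m0 : MeasurableSpace Ω} {μ : Measure Ω} [IsProbabilityMeasure μ]
    (f : Ω → X)
    (H' : ∀ G : ℕ → MeasurableSpace Ω, (∀ n, G n ≤ m0) → Monotone G →
      ∀ a : ℕ → ℝ, a 0 = 0 → StrictMono a → Tendsto a atTop (𝓝 (1 : ℝ)) →
        (∫⁻ ω, ((∫⁻ t in Ioi (0 : ℝ), ENNReal.ofReal
            (‖∑' k : ℕ, (t * (-Real.log (1 - a (k + 1))) *
              Real.exp (-(t * (-Real.log (1 - a (k + 1)))))) • dEv μ G f (k + 2) ω‖ ^ q / t))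
            ^ (1 / q)) ^ q ∂μ) ^ (1 / q) ≤
          ENNReal.ofReal c * eLpNorm f (ENNReal.ofReal q) μ)
    (F' : ℕ → MeasurableSpace Ω) (hF' : ∀ n, F' n ≤ m0) (hF'm : Monotone F')
    (K : ℕ) (hK : 1 ≤ K)
    (hstop : ∀ k : ℕ, K ≤ k → ∀ ω, dEv μ F' f (k + 2) ω = 0) :
    ∑ k ∈ Finset.range K, ∫⁻ ω, ENNReal.ofReal (‖dEv μ F' f (k + 2) ω‖ ^ q) ∂μ ≤
      (2 : ℝ≥0∞) ^ q * (2 * ENNReal.ofReal (Real.exp 2) ^ q * ENNReal.ofReal c ^ q + 1) *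
        ∫⁻ ω, ENNReal.ofReal (‖f ω‖ ^ q) ∂μ := by
  have hq0 : (0 : ℝ) < q := by linarith
  have hq1 : (1 : ℝ) ≤ q := by linarith
  have hK1 : (1 : ℝ) ≤ (K : ℝ) := by exact_mod_cast hK
  have hKpos : (0 : ℝ) < (K : ℝ) := by linarith
  have hγ0 : ENNReal.ofReal (Real.exp 2) ≠ 0 := (ENNReal.ofReal_pos.mpr (Real.exp_pos 2)).ne'
  have hγt : ENNReal.ofReal (Real.exp 2) ≠ ∞ := ENNReal.ofReal_ne_top
  have hcol : ∀ x : ℝ≥0∞, (x ^ (1 / q)) ^ q = x := rpow_collapse hq0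
  have hcol2 : ∀ x : ℝ≥0∞, (x ^ q) ^ (1 / q) = x := fun x => by
    rw [← ENNReal.rpow_mul, mul_one_div, div_self hq0.ne', ENNReal.rpow_one]
  have hp1 : (1 : ℝ≥0∞) ≤ ENNReal.ofReal q := by
    rw [← ENNReal.ofReal_one]; exact ENNReal.ofReal_le_ofReal hq1
  have hΦq : (eLpNorm f (ENNReal.ofReal q) μ) ^ q
      = ∫⁻ ω, ENNReal.ofReal (‖f ω‖ ^ q) ∂μ := eLpNorm_rpow_q μ hq0 f
  -- measurability of the martingale differences
  have hCm : ∀ n : ℕ, n ≠ 0 → AEStronglyMeasurable (condEv μ F' f n) μ := by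
    intro n hn
    have h : condEv μ F' f n = μ[f|F' n] := by simp only [condEv, if_neg hn]
    rw [h]
    exact (stronglyMeasurable_condExp.mono (hF' n)).aestronglyMeasurable
  have hDm : ∀ j : ℕ, AEStronglyMeasurable (dEv μ F' f (j + 2)) μ := by
    intro j
    exact ((hCm (j + 2) (by omega)).sub (hCm (j + 1) (by omega)))
  -- single-difference bound via shifted filtrations
  have hsingleLp : ∀ j : ℕ, eLpNorm (dEv μ F' f (j + 2)) (ENNReal.ofReal q) μ ≤
      2 * ENNReal.ofReal (Real.exp 2) * ENNReal.ofReal c * eLpNorm f (ENNReal.ofReal q) μ := by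
    intro j
    have hGsm : Monotone (fun n => F' (min (n + j) (j + 2))) := by
      intro n m hnm
      exact hF'm (by omega)
    have HHs := H' (fun n => F' (min (n + j) (j + 2))) (fun n => hF' _) hGsm
      (aseq 2) (aseq_zero 2) (aseq_strictMono one_lt_two) (aseq_tendsto one_lt_two)
    have hstops : ∀ k : ℕ, 1 ≤ k → ∀ ω,
        dEv μ (fun n => F' (min (n + j) (j + 2))) f (k + 2) ω = 0 := by
      intro k hk ω
      show condEv μ _ f (k + 2) ω - condEv μ _ f (k + 1) ω = 0
      have e1 : min (k + 2 + j) (j + 2) = j + 2 := by omega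
      have e2 : min (k + 1 + j) (j + 2) = j + 2 := by omega
      simp only [condEv, if_neg (by omega : ¬ k + 2 = 0), if_neg (by omega : ¬ k + 1 = 0),
        e1, e2, sub_self]
    have hD2 : dEv μ (fun n => F' (min (n + j) (j + 2))) f 2 = dEv μ F' f (j + 2) := by
      funext ω
      show condEv μ _ f 2 ω - condEv μ _ f 1 ω = condEv μ F' f (j + 2) ω - condEv μ F' f (j + 1) ω
      have e1 : min (2 + j) (j + 2) = j + 2 := by omega
      have e2 : min (1 + j) (j + 2) = j + 1 := by omega
      simp only [condEv, if_neg (by omega : ¬ (2 : ℕ) = 0), if_neg (by omega : ¬ (1 : ℕ) = 0),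
        if_neg (by omega : ¬ j + 2 = 0), if_neg (by omega : ¬ j + 1 = 0), e1, e2]
    have hks := key_single hq hc (fun n => F' (min (n + j) (j + 2))) f HHs hstops
    rw [hD2] at hks
    have h1 : eLpNorm (dEv μ F' f (j + 2)) (ENNReal.ofReal q) μ
        = (∫⁻ ω, ENNReal.ofReal (‖dEv μ F' f (j + 2) ω‖ ^ q) ∂μ) ^ (1 / q) := by
      rw [← eLpNorm_rpow_q μ hq0, hcol2]
    rw [h1]
    calc (∫⁻ ω, ENNReal.ofReal (‖dEv μ F' f (j + 2) ω‖ ^ q) ∂μ) ^ (1 / q)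
        ≤ (2 * ENNReal.ofReal (Real.exp 2) ^ q * ENNReal.ofReal c ^ q *
            ∫⁻ ω, ENNReal.ofReal (‖f ω‖ ^ q) ∂μ) ^ (1 / q) :=
          ENNReal.rpow_le_rpow hks (by positivity)
      _ = 2 ^ (1 / q) * ENNReal.ofReal (Real.exp 2) * ENNReal.ofReal c *
            eLpNorm f (ENNReal.ofReal q) μ := by
          rw [ENNReal.mul_rpow_of_nonneg _ _ (by positivity),
            ENNReal.mul_rpow_of_nonneg _ _ (by positivity),
            ENNReal.mul_rpow_of_nonneg _ _ (by positivity),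
            hcol2, hcol2, ← hΦq, hcol2]
      _ ≤ 2 * ENNReal.ofReal (Real.exp 2) * ENNReal.ofReal c *
            eLpNorm f (ENNReal.ofReal q) μ := by
          gcongr
          calc (2 : ℝ≥0∞) ^ (1 / q) ≤ 2 ^ (1 : ℝ) :=
                ENNReal.rpow_le_rpow_of_exponent_le one_le_two
                  (by rw [div_le_one hq0]; linarith)
            _ = 2 := ENNReal.rpow_one 2
  -- bound on the sum function S
  have hSr0 : ∀ ω : Ω, (0 : ℝ) ≤ ∑ j ∈ Finset.range K, ‖dEv μ F' f (j + 2) ω‖ :=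
    fun ω => Finset.sum_nonneg fun j _ => norm_nonneg _
  have hSrm : AEMeasurable (fun ω => ∑ j ∈ Finset.range K, ‖dEv μ F' f (j + 2) ω‖) μ :=
    Finset.aemeasurable_fun_sum _ fun j _ => (hDm j).norm.aemeasurable
  have hSint : ∫⁻ ω, (ENNReal.ofReal (∑ j ∈ Finset.range K, ‖dEv μ F' f (j + 2) ω‖)) ^ q ∂μ
      ≤ ((K : ℝ≥0∞) * (2 * ENNReal.ofReal (Real.exp 2) * ENNReal.ofReal c)) ^ q *
        ∫⁻ ω, ENNReal.ofReal (‖f ω‖ ^ q) ∂μ := by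
    have hSlp : eLpNorm (fun ω => ∑ j ∈ Finset.range K, ‖dEv μ F' f (j + 2) ω‖)
        (ENNReal.ofReal q) μ ≤ (K : ℝ≥0∞) *
          (2 * ENNReal.ofReal (Real.exp 2) * ENNReal.ofReal c * eLpNorm f (ENNReal.ofReal q) μ) := by
      have hsum : (fun ω => ∑ j ∈ Finset.range K, ‖dEv μ F' f (j + 2) ω‖)
          = ∑ j ∈ Finset.range K, (fun ω => ‖dEv μ F' f (j + 2) ω‖) := by
        funext ω; rw [Finset.sum_apply]
      rw [hsum]
      calc eLpNorm (∑ j ∈ Finset.range K, (fun ω => ‖dEv μ F' f (j + 2) ω‖))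
            (ENNReal.ofReal q) μ
          ≤ ∑ j ∈ Finset.range K, eLpNorm (fun ω => ‖dEv μ F' f (j + 2) ω‖)
              (ENNReal.ofReal q) μ :=
            eLpNorm_sum_le (fun j _ => (hDm j).norm) hp1
        _ = ∑ j ∈ Finset.range K, eLpNorm (dEv μ F' f (j + 2)) (ENNReal.ofReal q) μ :=
            Finset.sum_congr rfl fun j _ => eLpNorm_norm _
        _ ≤ ∑ _j ∈ Finset.range K, (2 * ENNReal.ofReal (Real.exp 2) * ENNReal.ofReal c *
              eLpNorm f (ENNReal.ofReal q) μ) :=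
            Finset.sum_le_sum fun j _ => hsingleLp j
        _ = (K : ℝ≥0∞) * (2 * ENNReal.ofReal (Real.exp 2) * ENNReal.ofReal c *
              eLpNorm f (ENNReal.ofReal q) μ) := by
            rw [Finset.sum_const, Finset.card_range, nsmul_eq_mul]
    have h2 : ∫⁻ ω, (ENNReal.ofReal (∑ j ∈ Finset.range K, ‖dEv μ F' f (j + 2) ω‖)) ^ q ∂μ
        = (eLpNorm (fun ω => ∑ j ∈ Finset.range K, ‖dEv μ F' f (j + 2) ω‖)
            (ENNReal.ofReal q) μ) ^ q := by
      rw [eLpNorm_rpow_q μ hq0]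
      refine lintegral_congr fun ω => ?_
      rw [Real.norm_of_nonneg (hSr0 ω), ENNReal.ofReal_rpow_of_nonneg (hSr0 ω) hq0.le]
    rw [h2]
    calc (eLpNorm (fun ω => ∑ j ∈ Finset.range K, ‖dEv μ F' f (j + 2) ω‖)
            (ENNReal.ofReal q) μ) ^ q
        ≤ ((K : ℝ≥0∞) * (2 * ENNReal.ofReal (Real.exp 2) * ENNReal.ofReal c *
            eLpNorm f (ENNReal.ofReal q) μ)) ^ q := ENNReal.rpow_le_rpow hSlp hq0.le
      _ = ((K : ℝ≥0∞) * (2 * ENNReal.ofReal (Real.exp 2) * ENNReal.ofReal c)) ^ q *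
            ∫⁻ ω, ENNReal.ofReal (‖f ω‖ ^ q) ∂μ := by
          rw [show (K : ℝ≥0∞) * (2 * ENNReal.ofReal (Real.exp 2) * ENNReal.ofReal c *
              eLpNorm f (ENNReal.ofReal q) μ)
            = ((K : ℝ≥0∞) * (2 * ENNReal.ofReal (Real.exp 2) * ENNReal.ofReal c)) *
              eLpNorm f (ENNReal.ofReal q) μ by ring,
            ENNReal.mul_rpow_of_nonneg _ _ hq0.le, hΦq]
  -- choose R large depending on K and c
  set R : ℝ := 3456 * (c + 1) * (K : ℝ) ^ 3 with hRdef
  have hK3 : (1 : ℝ) ≤ (K : ℝ) ^ 3 := one_le_pow₀ hK1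
  have hR1 : 1 < R := by rw [hRdef]; nlinarith
  have hR2 : 2 ≤ R := by rw [hRdef]; nlinarith
  have hRpos : (0 : ℝ) < R := by linarith
  have HR := H' F' hF' hF'm (aseq R) (aseq_zero R) (aseq_strictMono hR1) (aseq_tendsto hR1)
  have hcoef : ∀ k : ℕ, -Real.log (1 - aseq R (k + 1)) = R ^ (k + 1) :=
    fun k => neg_log_aseq (k + 1) (by omega)
  simp only [hcoef, hcol] at HR
  have hWfin : ∀ (ω : Ω) (t : ℝ),
      (∑' k : ℕ, (t * R ^ (k + 1) * Real.exp (-(t * R ^ (k + 1)))) • dEv μ F' f (k + 2) ω)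
      = ∑ j ∈ Finset.range K,
          (t * R ^ (j + 1) * Real.exp (-(t * R ^ (j + 1)))) • dEv μ F' f (j + 2) ω := by
    intro ω t
    exact tsum_eq_sum fun j hj => by rw [hstop j (by simpa using hj) ω, smul_zero]
  simp only [hWfin] at HR
  have HG : (∫⁻ ω, (∫⁻ t in Ioi (0 : ℝ), ENNReal.ofReal
      (‖∑ j ∈ Finset.range K, (t * R ^ (j + 1) * Real.exp (-(t * R ^ (j + 1)))) •
        dEv μ F' f (j + 2) ω‖ ^ q / t)) ∂μ)
      ≤ (ENNReal.ofReal c * eLpNorm f (ENNReal.ofReal q) μ) ^ q := by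
    have h := ENNReal.rpow_le_rpow HR hq0.le
    rwa [hcol] at h
  -- pointwise estimate
  have hptsum : ∀ ω : Ω, ∑ k ∈ Finset.range K,
      (ENNReal.ofReal ‖dEv μ F' f (k + 2) ω‖ - ENNReal.ofReal (Real.exp 2 * (27 / R)) *
        ENNReal.ofReal (∑ j ∈ Finset.range K, ‖dEv μ F' f (j + 2) ω‖)) ^ q
      ≤ 2 * ENNReal.ofReal (Real.exp 2) ^ q * ∫⁻ t in Ioi (0 : ℝ), ENNReal.ofReal
        (‖∑ j ∈ Finset.range K, (t * R ^ (j + 1) * Real.exp (-(t * R ^ (j + 1)))) •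
          dEv μ F' f (j + 2) ω‖ ^ q / t) := by
    intro ω
    calc ∑ k ∈ Finset.range K,
        (ENNReal.ofReal ‖dEv μ F' f (k + 2) ω‖ - ENNReal.ofReal (Real.exp 2 * (27 / R)) *
          ENNReal.ofReal (∑ j ∈ Finset.range K, ‖dEv μ F' f (j + 2) ω‖)) ^ q
        ≤ ∑ k ∈ Finset.range K, 2 * ENNReal.ofReal (Real.exp 2) ^ q *
            ∫⁻ t in Ioc ((R ^ (k + 1))⁻¹) (2 * (R ^ (k + 1))⁻¹), ENNReal.ofReal
              (‖∑ j ∈ Finset.range K, (t * R ^ (j + 1) * Real.exp (-(t * R ^ (j + 1)))) •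
                dEv μ F' f (j + 2) ω‖ ^ q / t) := by
          apply Finset.sum_le_sum
          intro k hk
          apply interval_bound hq1 (by positivity : (0 : ℝ) < (R ^ (k + 1))⁻¹) hγ0 hγt
          intro t ht
          have ht0 : (0 : ℝ) < t := lt_trans (by positivity) ht.1
          rw [tsub_le_iff_right]
          have hvec := vec_bound (Finset.mem_range.mp hk) (fun j => dEv μ F' f (j + 2) ω)
            (fun j => t * R ^ (j + 1) * Real.exp (-(t * R ^ (j + 1))))
            (fun j => mul_nonneg (mul_nonneg ht0.le (by positivity)) (Real.exp_pos _).le)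
            (coeff_lower hR1 ht.1 ht.2)
            (by positivity : (0 : ℝ) ≤ 27 / R)
            (fun j hjk => coeff_upper hR1 hjk ht.1 ht.2)
          calc ENNReal.ofReal ‖dEv μ F' f (k + 2) ω‖
              ≤ ENNReal.ofReal (Real.exp 2 *
                  ‖∑ j ∈ Finset.range K, (t * R ^ (j + 1) * Real.exp (-(t * R ^ (j + 1)))) •
                    dEv μ F' f (j + 2) ω‖
                + Real.exp 2 * (27 / R) * ∑ j ∈ Finset.range K, ‖dEv μ F' f (j + 2) ω‖) :=
                ENNReal.ofReal_le_ofReal hvec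
            _ ≤ ENNReal.ofReal (Real.exp 2) * ENNReal.ofReal
                  ‖∑ j ∈ Finset.range K, (t * R ^ (j + 1) * Real.exp (-(t * R ^ (j + 1)))) •
                    dEv μ F' f (j + 2) ω‖
                + ENNReal.ofReal (Real.exp 2 * (27 / R)) *
                  ENNReal.ofReal (∑ j ∈ Finset.range K, ‖dEv μ F' f (j + 2) ω‖) := by
                rw [ENNReal.ofReal_add (by positivity)
                  (mul_nonneg (by positivity) (hSr0 ω)),
                  ENNReal.ofReal_mul (Real.exp_pos 2).le,
                  ENNReal.ofReal_mul (by positivity)]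
      _ = 2 * ENNReal.ofReal (Real.exp 2) ^ q * ∑ k ∈ Finset.range K,
            ∫⁻ t in Ioc ((R ^ (k + 1))⁻¹) (2 * (R ^ (k + 1))⁻¹), ENNReal.ofReal
              (‖∑ j ∈ Finset.range K, (t * R ^ (j + 1) * Real.exp (-(t * R ^ (j + 1)))) •
                dEv μ F' f (j + 2) ω‖ ^ q / t) := by
          rw [Finset.mul_sum]
      _ ≤ 2 * ENNReal.ofReal (Real.exp 2) ^ q * ∫⁻ t in Ioi (0 : ℝ), ENNReal.ofReal
            (‖∑ j ∈ Finset.range K, (t * R ^ (j + 1) * Real.exp (-(t * R ^ (j + 1)))) •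
              dEv μ F' f (j + 2) ω‖ ^ q / t) := by
          gcongr
          exact sum_Ioc_lintegral_le hR2 K _
  have hmainA : ∑ k ∈ Finset.range K, ∫⁻ ω,
      (ENNReal.ofReal ‖dEv μ F' f (k + 2) ω‖ - ENNReal.ofReal (Real.exp 2 * (27 / R)) *
        ENNReal.ofReal (∑ j ∈ Finset.range K, ‖dEv μ F' f (j + 2) ω‖)) ^ q ∂μ
      ≤ 2 * ENNReal.ofReal (Real.exp 2) ^ q *
        (ENNReal.ofReal c * eLpNorm f (ENNReal.ofReal q) μ) ^ q := by
    calc ∑ k ∈ Finset.range K, ∫⁻ ω,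
        (ENNReal.ofReal ‖dEv μ F' f (k + 2) ω‖ - ENNReal.ofReal (Real.exp 2 * (27 / R)) *
          ENNReal.ofReal (∑ j ∈ Finset.range K, ‖dEv μ F' f (j + 2) ω‖)) ^ q ∂μ
        ≤ ∫⁻ ω, ∑ k ∈ Finset.range K,
            (ENNReal.ofReal ‖dEv μ F' f (k + 2) ω‖ - ENNReal.ofReal (Real.exp 2 * (27 / R)) *
              ENNReal.ofReal (∑ j ∈ Finset.range K, ‖dEv μ F' f (j + 2) ω‖)) ^ q ∂μ :=
          sum_lintegral_le μ K _
      _ ≤ ∫⁻ ω, 2 * ENNReal.ofReal (Real.exp 2) ^ q * (∫⁻ t in Ioi (0 : ℝ), ENNReal.ofReal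
            (‖∑ j ∈ Finset.range K, (t * R ^ (j + 1) * Real.exp (-(t * R ^ (j + 1)))) •
              dEv μ F' f (j + 2) ω‖ ^ q / t)) ∂μ := lintegral_mono hptsum
      _ = 2 * ENNReal.ofReal (Real.exp 2) ^ q * ∫⁻ ω, (∫⁻ t in Ioi (0 : ℝ), ENNReal.ofReal
            (‖∑ j ∈ Finset.range K, (t * R ^ (j + 1) * Real.exp (-(t * R ^ (j + 1)))) •
              dEv μ F' f (j + 2) ω‖ ^ q / t)) ∂μ :=
          lintegral_const_mul' _ _ (ENNReal.mul_ne_top (by norm_num)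
            (ENNReal.rpow_ne_top_of_nonneg hq0.le hγt))
      _ ≤ 2 * ENNReal.ofReal (Real.exp 2) ^ q *
            (ENNReal.ofReal c * eLpNorm f (ENNReal.ofReal q) μ) ^ q := mul_le_mul' le_rfl HG
  -- split each difference via the truncated quantity
  have herrm : AEMeasurable (fun ω => (ENNReal.ofReal (Real.exp 2 * (27 / R)) *
      ENNReal.ofReal (∑ j ∈ Finset.range K, ‖dEv μ F' f (j + 2) ω‖)) ^ q) μ :=
    (hSrm.ennreal_ofReal.const_mul _).pow aemeasurable_const
  have hDA : ∀ k : ℕ, ∫⁻ ω, ENNReal.ofReal (‖dEv μ F' f (k + 2) ω‖ ^ q) ∂μ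
      ≤ (2 : ℝ≥0∞) ^ q * ((∫⁻ ω,
          (ENNReal.ofReal ‖dEv μ F' f (k + 2) ω‖ - ENNReal.ofReal (Real.exp 2 * (27 / R)) *
            ENNReal.ofReal (∑ j ∈ Finset.range K, ‖dEv μ F' f (j + 2) ω‖)) ^ q ∂μ)
        + ∫⁻ ω, (ENNReal.ofReal (Real.exp 2 * (27 / R)) *
            ENNReal.ofReal (∑ j ∈ Finset.range K, ‖dEv μ F' f (j + 2) ω‖)) ^ q ∂μ) := by
    intro k
    calc ∫⁻ ω, ENNReal.ofReal (‖dEv μ F' f (k + 2) ω‖ ^ q) ∂μ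
        ≤ ∫⁻ ω, (2 : ℝ≥0∞) ^ q *
            ((ENNReal.ofReal ‖dEv μ F' f (k + 2) ω‖ - ENNReal.ofReal (Real.exp 2 * (27 / R)) *
              ENNReal.ofReal (∑ j ∈ Finset.range K, ‖dEv μ F' f (j + 2) ω‖)) ^ q
            + (ENNReal.ofReal (Real.exp 2 * (27 / R)) *
              ENNReal.ofReal (∑ j ∈ Finset.range K, ‖dEv μ F' f (j + 2) ω‖)) ^ q) ∂μ := by
          apply lintegral_mono
          intro ω
          calc ENNReal.ofReal (‖dEv μ F' f (k + 2) ω‖ ^ q)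
              = (ENNReal.ofReal ‖dEv μ F' f (k + 2) ω‖) ^ q := ofReal_norm_rpow' _ hq0.le
            _ ≤ ((ENNReal.ofReal ‖dEv μ F' f (k + 2) ω‖ -
                  ENNReal.ofReal (Real.exp 2 * (27 / R)) *
                    ENNReal.ofReal (∑ j ∈ Finset.range K, ‖dEv μ F' f (j + 2) ω‖))
                + ENNReal.ofReal (Real.exp 2 * (27 / R)) *
                    ENNReal.ofReal (∑ j ∈ Finset.range K, ‖dEv μ F' f (j + 2) ω‖)) ^ q :=
                ENNReal.rpow_le_rpow le_tsub_add hq0.le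
            _ ≤ _ := add_rpow_le hq0.le
      _ = (2 : ℝ≥0∞) ^ q * ∫⁻ ω,
            ((ENNReal.ofReal ‖dEv μ F' f (k + 2) ω‖ - ENNReal.ofReal (Real.exp 2 * (27 / R)) *
              ENNReal.ofReal (∑ j ∈ Finset.range K, ‖dEv μ F' f (j + 2) ω‖)) ^ q
            + (ENNReal.ofReal (Real.exp 2 * (27 / R)) *
              ENNReal.ofReal (∑ j ∈ Finset.range K, ‖dEv μ F' f (j + 2) ω‖)) ^ q) ∂μ :=
          lintegral_const_mul' _ _ (ENNReal.rpow_ne_top_of_nonneg hq0.le (by norm_num))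
      _ = _ := by rw [lintegral_add_right' _ herrm]
  -- the error term
  have herr : (K : ℝ≥0∞) * ∫⁻ ω, (ENNReal.ofReal (Real.exp 2 * (27 / R)) *
      ENNReal.ofReal (∑ j ∈ Finset.range K, ‖dEv μ F' f (j + 2) ω‖)) ^ q ∂μ
      ≤ ∫⁻ ω, ENNReal.ofReal (‖f ω‖ ^ q) ∂μ := by
    have h1 : ∫⁻ ω, (ENNReal.ofReal (Real.exp 2 * (27 / R)) *
        ENNReal.ofReal (∑ j ∈ Finset.range K, ‖dEv μ F' f (j + 2) ω‖)) ^ q ∂μ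
        = ENNReal.ofReal (Real.exp 2 * (27 / R)) ^ q *
          ∫⁻ ω, (ENNReal.ofReal (∑ j ∈ Finset.range K, ‖dEv μ F' f (j + 2) ω‖)) ^ q ∂μ := by
      rw [← lintegral_const_mul' _ _
        (ENNReal.rpow_ne_top_of_nonneg hq0.le ENNReal.ofReal_ne_top)]
      exact lintegral_congr fun ω => ENNReal.mul_rpow_of_nonneg _ _ hq0.le
    have hyE : ENNReal.ofReal (Real.exp 2 * (27 / R)) *
        ((K : ℝ≥0∞) * (2 * ENNReal.ofReal (Real.exp 2) * ENNReal.ofReal c))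
        = ENNReal.ofReal ((Real.exp 2 * (27 / R)) * ((K : ℝ) * (2 * Real.exp 2 * c))) := by
      rw [ENNReal.ofReal_mul (by positivity : (0:ℝ) ≤ Real.exp 2 * (27 / R))]
      congr 1
      rw [ENNReal.ofReal_mul (by positivity : (0:ℝ) ≤ (K:ℝ)), ENNReal.ofReal_natCast]
      congr 1
      rw [ENNReal.ofReal_mul (by positivity : (0:ℝ) ≤ 2 * Real.exp 2),
        ENNReal.ofReal_mul (by norm_num : (0:ℝ) ≤ 2), ENNReal.ofReal_ofNat]
    have hexp8 : Real.exp 2 ≤ 8 := by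
      have h9 := Real.exp_one_lt_d9
      have he2 : Real.exp 2 = Real.exp 1 * Real.exp 1 := by rw [← Real.exp_add]; norm_num
      nlinarith [Real.exp_pos 1]
    have hyr : (Real.exp 2 * (27 / R)) * ((K : ℝ) * (2 * Real.exp 2 * c)) ≤ 1 / (K : ℝ) ^ 2 := by
      rw [show (Real.exp 2 * (27 / R)) * ((K : ℝ) * (2 * Real.exp 2 * c))
        = (54 * Real.exp 2 * Real.exp 2 * c * (K : ℝ)) / R by ring]
      rw [div_le_div_iff₀ hRpos (by positivity), hRdef]
      have hE2 : Real.exp 2 * Real.exp 2 ≤ 64 := by nlinarith [Real.exp_pos 2]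
      have hKp : (0 : ℝ) < (K : ℝ) ^ 3 := by positivity
      nlinarith [hKp, mul_nonneg (sub_nonneg.mpr hE2) (mul_nonneg hc.le hKp.le)]
    have hy : ENNReal.ofReal (Real.exp 2 * (27 / R)) *
        ((K : ℝ≥0∞) * (2 * ENNReal.ofReal (Real.exp 2) * ENNReal.ofReal c))
        ≤ ENNReal.ofReal (1 / (K : ℝ) ^ 2) := by
      rw [hyE]; exact ENNReal.ofReal_le_ofReal hyr
    have hy1 : ENNReal.ofReal (Real.exp 2 * (27 / R)) *
        ((K : ℝ≥0∞) * (2 * ENNReal.ofReal (Real.exp 2) * ENNReal.ofReal c)) ≤ 1 := by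
      refine hy.trans ?_
      rw [← ENNReal.ofReal_one]
      apply ENNReal.ofReal_le_ofReal
      rw [div_le_one (by positivity)]
      nlinarith [hK1, sq_nonneg ((K : ℝ) - 1)]
    calc (K : ℝ≥0∞) * ∫⁻ ω, (ENNReal.ofReal (Real.exp 2 * (27 / R)) *
          ENNReal.ofReal (∑ j ∈ Finset.range K, ‖dEv μ F' f (j + 2) ω‖)) ^ q ∂μ
        ≤ (K : ℝ≥0∞) * (ENNReal.ofReal (Real.exp 2 * (27 / R)) ^ q *
            (((K : ℝ≥0∞) * (2 * ENNReal.ofReal (Real.exp 2) * ENNReal.ofReal c)) ^ q *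
              ∫⁻ ω, ENNReal.ofReal (‖f ω‖ ^ q) ∂μ)) := by
          rw [h1]
          exact mul_le_mul' le_rfl (mul_le_mul' le_rfl hSint)
      _ = ((K : ℝ≥0∞) * (ENNReal.ofReal (Real.exp 2 * (27 / R)) *
            ((K : ℝ≥0∞) * (2 * ENNReal.ofReal (Real.exp 2) * ENNReal.ofReal c))) ^ q) *
            ∫⁻ ω, ENNReal.ofReal (‖f ω‖ ^ q) ∂μ := by
          simp only [ENNReal.mul_rpow_of_nonneg _ _ hq0.le]
          ring
      _ ≤ 1 * ∫⁻ ω, ENNReal.ofReal (‖f ω‖ ^ q) ∂μ := by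
          apply mul_le_mul' _ le_rfl
          calc (K : ℝ≥0∞) * (ENNReal.ofReal (Real.exp 2 * (27 / R)) *
                ((K : ℝ≥0∞) * (2 * ENNReal.ofReal (Real.exp 2) * ENNReal.ofReal c))) ^ q
              ≤ (K : ℝ≥0∞) * (ENNReal.ofReal (Real.exp 2 * (27 / R)) *
                ((K : ℝ≥0∞) * (2 * ENNReal.ofReal (Real.exp 2) * ENNReal.ofReal c))) ^ (1 : ℝ) :=
                mul_le_mul' le_rfl (ENNReal.rpow_le_rpow_of_exponent_ge hy1 hq1)
            _ = (K : ℝ≥0∞) * (ENNReal.ofReal (Real.exp 2 * (27 / R)) *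
                ((K : ℝ≥0∞) * (2 * ENNReal.ofReal (Real.exp 2) * ENNReal.ofReal c))) := by
                rw [ENNReal.rpow_one]
            _ ≤ (K : ℝ≥0∞) * ENNReal.ofReal (1 / (K : ℝ) ^ 2) := mul_le_mul' le_rfl hy
            _ = ENNReal.ofReal ((K : ℝ) * (1 / (K : ℝ) ^ 2)) := by
                rw [ENNReal.ofReal_mul (by positivity : (0:ℝ) ≤ (K:ℝ)), ENNReal.ofReal_natCast]
            _ ≤ 1 := by
                rw [← ENNReal.ofReal_one]
                apply ENNReal.ofReal_le_ofReal
                rw [show (K : ℝ) * (1 / (K : ℝ) ^ 2) = 1 / (K : ℝ) by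
                  field_simp]
                rw [div_le_one hKpos]
                exact hK1
      _ = ∫⁻ ω, ENNReal.ofReal (‖f ω‖ ^ q) ∂μ := one_mul _
  -- final assembly
  calc ∑ k ∈ Finset.range K, ∫⁻ ω, ENNReal.ofReal (‖dEv μ F' f (k + 2) ω‖ ^ q) ∂μ
      ≤ ∑ k ∈ Finset.range K, (2 : ℝ≥0∞) ^ q * ((∫⁻ ω,
          (ENNReal.ofReal ‖dEv μ F' f (k + 2) ω‖ - ENNReal.ofReal (Real.exp 2 * (27 / R)) *
            ENNReal.ofReal (∑ j ∈ Finset.range K, ‖dEv μ F' f (j + 2) ω‖)) ^ q ∂μ)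
        + ∫⁻ ω, (ENNReal.ofReal (Real.exp 2 * (27 / R)) *
            ENNReal.ofReal (∑ j ∈ Finset.range K, ‖dEv μ F' f (j + 2) ω‖)) ^ q ∂μ) :=
        Finset.sum_le_sum fun k _ => hDA k
    _ = (2 : ℝ≥0∞) ^ q * (∑ k ∈ Finset.range K, ∫⁻ ω,
          (ENNReal.ofReal ‖dEv μ F' f (k + 2) ω‖ - ENNReal.ofReal (Real.exp 2 * (27 / R)) *
            ENNReal.ofReal (∑ j ∈ Finset.range K, ‖dEv μ F' f (j + 2) ω‖)) ^ q ∂μ)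
        + (2 : ℝ≥0∞) ^ q * ((K : ℝ≥0∞) * ∫⁻ ω, (ENNReal.ofReal (Real.exp 2 * (27 / R)) *
            ENNReal.ofReal (∑ j ∈ Finset.range K, ‖dEv μ F' f (j + 2) ω‖)) ^ q ∂μ) := by
        simp only [mul_add, Finset.sum_add_distrib, ← Finset.mul_sum, Finset.sum_const,
          Finset.card_range, nsmul_eq_mul]
    _ ≤ (2 : ℝ≥0∞) ^ q * (2 * ENNReal.ofReal (Real.exp 2) ^ q *
          (ENNReal.ofReal c * eLpNorm f (ENNReal.ofReal q) μ) ^ q)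
        + (2 : ℝ≥0∞) ^ q * ∫⁻ ω, ENNReal.ofReal (‖f ω‖ ^ q) ∂μ :=
        add_le_add (mul_le_mul' le_rfl hmainA) (mul_le_mul' le_rfl herr)
    _ = (2 : ℝ≥0∞) ^ q * (2 * ENNReal.ofReal (Real.exp 2) ^ q * ENNReal.ofReal c ^ q + 1) *
          ∫⁻ ω, ENNReal.ofReal (‖f ω‖ ^ q) ∂μ := by
        rw [ENNReal.mul_rpow_of_nonneg _ _ hq0.le, hΦq]
        ring


/-- If for some constant `c > 0` the `L_q`-Littlewood-Paley-Stein inequality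
`‖G_q^T(f)‖_{L_q(Ω)} ≤ c ‖f‖_{L_q(Ω;X)}` holds for the semigroup built from every strictly
increasing sequence `(a_n)` (with `a_0 = 0`, `a_n → 1`) on every filtered probability space,
then `X` is of martingale cotype `q`. -/
theorem stmt18 (X : Type u) [NormedAddCommGroup X] [NormedSpace ℝ X] [CompleteSpace X]
    (q : ℝ) (hq : 2 ≤ q) (c : ℝ) (hc : 0 < c)
    (H : ∀ (Ω : Type v) (m0 : MeasurableSpace Ω) (μ : Measure Ω), IsProbabilityMeasure μ →
      ∀ F : ℕ → MeasurableSpace Ω, (∀ n, F n ≤ m0) → Monotone F →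
      ∀ a : ℕ → ℝ, a 0 = 0 → StrictMono a → Tendsto a atTop (𝓝 (1 : ℝ)) →
      ∀ f : Ω → X, MemLp f (ENNReal.ofReal q) μ →
        (∫⁻ ω, ((∫⁻ t in Ioi (0 : ℝ), ENNReal.ofReal
            (‖∑' k : ℕ, (t * (-Real.log (1 - a (k + 1))) *
              Real.exp (-(t * (-Real.log (1 - a (k + 1)))))) • dEv μ F f (k + 2) ω‖ ^ q / t))
            ^ (1 / q)) ^ q ∂μ) ^ (1 / q) ≤
          ENNReal.ofReal c * eLpNorm f (ENNReal.ofReal q) μ) :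
    ∃ c' : ℝ, 0 < c' ∧
      ∀ (Ω : Type v) (m0 : MeasurableSpace Ω) (μ : Measure Ω), IsProbabilityMeasure μ →
      ∀ F : ℕ → MeasurableSpace Ω, (∀ n, F n ≤ m0) → Monotone F →
      ∀ f : Ω → X, MemLp f (ENNReal.ofReal q) μ →
        (∑' n : ℕ, ∫⁻ ω, ENNReal.ofReal (‖dEv μ F f (n + 1) ω‖ ^ q) ∂μ) ≤
          ENNReal.ofReal (c' ^ q) * ∫⁻ ω, ENNReal.ofReal (‖f ω‖ ^ q) ∂μ := by
  have hq0 : (0 : ℝ) < q := by linarith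
  have hq1 : (1 : ℝ) ≤ q := by linarith
  have hB0 : (0 : ℝ) < 2 * (2 ^ q * (2 * Real.exp 2 ^ q * c ^ q + 1)) := by positivity
  refine ⟨(2 * (2 ^ q * (2 * Real.exp 2 ^ q * c ^ q + 1))) ^ (1 / q), by positivity, ?_⟩
  intro Ω m0 μ hμ F hF hFm f hf
  have hc'q : ((2 * (2 ^ q * (2 * Real.exp 2 ^ q * c ^ q + 1))) ^ (1 / q)) ^ q
      = 2 * (2 ^ q * (2 * Real.exp 2 ^ q * c ^ q + 1)) := by
    rw [← Real.rpow_mul hB0.le, one_div, inv_mul_cancel₀ hq0.ne', Real.rpow_one]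
  rw [hc'q]
  have hp1 : (1 : ℝ≥0∞) ≤ ENNReal.ofReal q := by
    rw [← ENNReal.ofReal_one]; exact ENNReal.ofReal_le_ofReal hq1
  have H' : ∀ G : ℕ → MeasurableSpace Ω, (∀ n, G n ≤ m0) → Monotone G →
      ∀ a : ℕ → ℝ, a 0 = 0 → StrictMono a → Tendsto a atTop (𝓝 (1 : ℝ)) →
        (∫⁻ ω, ((∫⁻ t in Ioi (0 : ℝ), ENNReal.ofReal
            (‖∑' k : ℕ, (t * (-Real.log (1 - a (k + 1))) *
              Real.exp (-(t * (-Real.log (1 - a (k + 1)))))) • dEv μ G f (k + 2) ω‖ ^ q / t))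
            ^ (1 / q)) ^ q ∂μ) ^ (1 / q) ≤
          ENNReal.ofReal c * eLpNorm f (ENNReal.ofReal q) μ :=
    fun G hG hGm a ha0 ham hat => H Ω m0 μ hμ G hG hGm a ha0 ham hat f hf
  -- the constant for blocks
  -- term 0 : via the ⊥-jump filtration
  have hbot : (μ[f| (⊥ : MeasurableSpace Ω)]) = fun _ => ∫ x, f x ∂μ := condExp_bot f
  have hG0m : Monotone (fun n : ℕ => if n ≤ 1 then (⊥ : MeasurableSpace Ω) else F 1) := by
    intro a b hab
    by_cases hb : b ≤ 1
    · have ha : a ≤ 1 := le_trans hab hb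
      simp only [if_pos ha, if_pos hb, le_refl]
    · by_cases ha : a ≤ 1
      · simp only [if_pos ha, if_neg hb]; exact bot_le
      · simp only [if_neg ha, if_neg hb, le_refl]
  have hG0le : ∀ n, (fun n : ℕ => if n ≤ 1 then (⊥ : MeasurableSpace Ω) else F 1) n ≤ m0 := by
    intro n
    by_cases hn : n ≤ 1
    · simp only [if_pos hn]; exact bot_le
    · simp only [if_neg hn]; exact hF 1
  have HH0 := H' (fun n : ℕ => if n ≤ 1 then ⊥ else F 1) hG0le hG0m (aseq 2) (aseq_zero 2)
    (aseq_strictMono one_lt_two) (aseq_tendsto one_lt_two)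
  have hstop0 : ∀ k : ℕ, 1 ≤ k → ∀ ω,
      dEv μ (fun n : ℕ => if n ≤ 1 then ⊥ else F 1) f (k + 2) ω = 0 := by
    intro k hk ω
    show condEv μ _ f (k + 2) ω - condEv μ _ f (k + 1) ω = 0
    simp only [condEv, if_neg (by omega : ¬ k + 2 = 0), if_neg (by omega : ¬ k + 1 = 0),
      if_neg (by omega : ¬ k + 2 ≤ 1), if_neg (by omega : ¬ k + 1 ≤ 1), sub_self]
  have hks0 := key_single hq hc _ f HH0 hstop0
  have hd2 : ∀ ω : Ω, dEv μ (fun n : ℕ => if n ≤ 1 then ⊥ else F 1) f 2 ω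
      = (μ[f|F 1]) ω - ∫ x, f x ∂μ := by
    intro ω
    show condEv μ _ f 2 ω - condEv μ _ f 1 ω = _
    simp only [condEv, if_neg (by omega : ¬ (2 : ℕ) = 0), if_neg (by omega : ¬ (1 : ℕ) = 0),
      if_neg (by omega : ¬ (2 : ℕ) ≤ 1), if_pos (by omega : (1 : ℕ) ≤ 1)]
    rw [hbot]
  have hd1 : ∀ ω : Ω, dEv μ F f 1 ω = (μ[f|F 1]) ω := by
    intro ω
    show condEv μ F f 1 ω - condEv μ F f 0 ω = _
    simp only [condEv, if_neg (by omega : ¬ (1 : ℕ) = 0), if_pos rfl]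
    simp
  have hm : ENNReal.ofReal ‖∫ x, f x ∂μ‖ ^ q ≤ ∫⁻ ω, ENNReal.ofReal (‖f ω‖ ^ q) ∂μ := by
    have h1 : ENNReal.ofReal ‖∫ x, f x ∂μ‖ ≤ eLpNorm f 1 μ := by
      calc ENNReal.ofReal ‖∫ x, f x ∂μ‖ = ‖∫ x, f x ∂μ‖ₑ :=
            (ofReal_norm_eq_enorm _)
        _ ≤ ∫⁻ x, ‖f x‖ₑ ∂μ := enorm_integral_le_lintegral_enorm f
        _ = eLpNorm f 1 μ := eLpNorm_one_eq_lintegral_enorm.symm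
    have h2 : eLpNorm f 1 μ ≤ eLpNorm f (ENNReal.ofReal q) μ :=
      eLpNorm_le_eLpNorm_of_exponent_le hp1 hf.1
    calc ENNReal.ofReal ‖∫ x, f x ∂μ‖ ^ q ≤ (eLpNorm f (ENNReal.ofReal q) μ) ^ q :=
          ENNReal.rpow_le_rpow (h1.trans h2) hq0.le
      _ = _ := eLpNorm_rpow_q μ hq0 f
  have hterm0 : ∫⁻ ω, ENNReal.ofReal (‖dEv μ F f 1 ω‖ ^ q) ∂μ ≤
      (2 : ℝ≥0∞) ^ q * (2 * ENNReal.ofReal (Real.exp 2) ^ q * ENNReal.ofReal c ^ q + 1) *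
        ∫⁻ ω, ENNReal.ofReal (‖f ω‖ ^ q) ∂μ := by
    calc ∫⁻ ω, ENNReal.ofReal (‖dEv μ F f 1 ω‖ ^ q) ∂μ
        ≤ ∫⁻ ω, (2 : ℝ≥0∞) ^ q *
            ((ENNReal.ofReal ‖dEv μ (fun n : ℕ => if n ≤ 1 then ⊥ else F 1) f 2 ω‖) ^ q
            + (ENNReal.ofReal ‖∫ x, f x ∂μ‖) ^ q) ∂μ := by
          apply lintegral_mono
          intro ω
          calc ENNReal.ofReal (‖dEv μ F f 1 ω‖ ^ q)
              = (ENNReal.ofReal ‖dEv μ F f 1 ω‖) ^ q := ofReal_norm_rpow' _ hq0.le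
            _ ≤ ((ENNReal.ofReal ‖dEv μ (fun n : ℕ => if n ≤ 1 then ⊥ else F 1) f 2 ω‖)
                + ENNReal.ofReal ‖∫ x, f x ∂μ‖) ^ q := by
                apply ENNReal.rpow_le_rpow _ hq0.le
                rw [← ENNReal.ofReal_add (norm_nonneg _) (norm_nonneg _)]
                apply ENNReal.ofReal_le_ofReal
                rw [hd1 ω]
                calc ‖(μ[f|F 1]) ω‖
                    = ‖((μ[f|F 1]) ω - ∫ x, f x ∂μ) + ∫ x, f x ∂μ‖ := by rw [sub_add_cancel]
                  _ ≤ ‖(μ[f|F 1]) ω - ∫ x, f x ∂μ‖ + ‖∫ x, f x ∂μ‖ := norm_add_le _ _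
                  _ = ‖dEv μ (fun n : ℕ => if n ≤ 1 then ⊥ else F 1) f 2 ω‖
                      + ‖∫ x, f x ∂μ‖ := by rw [hd2 ω]
            _ ≤ _ := add_rpow_le hq0.le
      _ = (2 : ℝ≥0∞) ^ q *
            ((∫⁻ ω, (ENNReal.ofReal ‖dEv μ (fun n : ℕ => if n ≤ 1 then ⊥ else F 1) f 2 ω‖) ^ q ∂μ)
            + ∫⁻ _ω, (ENNReal.ofReal ‖∫ x, f x ∂μ‖) ^ q ∂μ) := by
          rw [lintegral_const_mul' _ _ (ENNReal.rpow_ne_top_of_nonneg hq0.le (by norm_num)),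
            lintegral_add_right' _ aemeasurable_const]
      _ ≤ (2 : ℝ≥0∞) ^ q * ((2 * ENNReal.ofReal (Real.exp 2) ^ q * ENNReal.ofReal c ^ q *
            ∫⁻ ω, ENNReal.ofReal (‖f ω‖ ^ q) ∂μ) + ∫⁻ ω, ENNReal.ofReal (‖f ω‖ ^ q) ∂μ) := by
          apply mul_le_mul' le_rfl
          apply add_le_add
          · calc ∫⁻ ω, (ENNReal.ofReal ‖dEv μ (fun n : ℕ => if n ≤ 1 then ⊥ else F 1) f 2 ω‖) ^ q ∂μ
                = ∫⁻ ω, ENNReal.ofReal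
                    (‖dEv μ (fun n : ℕ => if n ≤ 1 then ⊥ else F 1) f 2 ω‖ ^ q) ∂μ :=
                  lintegral_congr fun ω => (ofReal_norm_rpow' _ hq0.le).symm
              _ ≤ _ := hks0
          · rw [lintegral_const, measure_univ, mul_one]
            exact hm
      _ = (2 : ℝ≥0∞) ^ q * (2 * ENNReal.ofReal (Real.exp 2) ^ q * ENNReal.ofReal c ^ q + 1) *
            ∫⁻ ω, ENNReal.ofReal (‖f ω‖ ^ q) ∂μ := by ring
  -- constant bookkeeping
  have hofB : ENNReal.ofReal (2 * (2 ^ q * (2 * Real.exp 2 ^ q * c ^ q + 1)))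
      = 2 * ((2 : ℝ≥0∞) ^ q * (2 * ENNReal.ofReal (Real.exp 2) ^ q * ENNReal.ofReal c ^ q + 1)) := by
    rw [ENNReal.ofReal_mul (by norm_num : (0:ℝ) ≤ 2), ENNReal.ofReal_ofNat]
    congr 1
    rw [ENNReal.ofReal_mul (by positivity : (0:ℝ) ≤ (2:ℝ) ^ q)]
    congr 1
    · rw [← ENNReal.ofReal_rpow_of_nonneg (by norm_num : (0:ℝ) ≤ 2) hq0.le, ENNReal.ofReal_ofNat]
    · rw [ENNReal.ofReal_add (by positivity) (by norm_num : (0:ℝ) ≤ 1), ENNReal.ofReal_one]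
      congr 1
      rw [ENNReal.ofReal_mul (by positivity : (0:ℝ) ≤ 2 * Real.exp 2 ^ q),
        ENNReal.ofReal_mul (by norm_num : (0:ℝ) ≤ 2), ENNReal.ofReal_ofNat]
      congr 1
      · congr 1
        rw [← ENNReal.ofReal_rpow_of_nonneg (Real.exp_pos 2).le hq0.le]
      · rw [← ENNReal.ofReal_rpow_of_nonneg hc.le hq0.le]
  -- sum over partial sums
  apply ENNReal.tsum_le_of_sum_range_le
  intro N
  cases N with
  | zero => simp only [Finset.range_zero, Finset.sum_empty]; exact zero_le
  | succ K =>
    rw [Finset.sum_range_succ']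
    have hF'le : ∀ n, (fun n : ℕ => F (min n (K + 1))) n ≤ m0 := fun n => hF _
    have hF'm : Monotone (fun n : ℕ => F (min n (K + 1))) := fun a b hab => hFm (by omega)
    have hstop : ∀ k : ℕ, K ≤ k → ∀ ω, dEv μ (fun n : ℕ => F (min n (K + 1))) f (k + 2) ω = 0 := by
      intro k hk ω
      show condEv μ _ f (k + 2) ω - condEv μ _ f (k + 1) ω = 0
      have e1 : min (k + 2) (K + 1) = K + 1 := by omega
      have e2 : min (k + 1) (K + 1) = K + 1 := by omega
      simp only [condEv, if_neg (by omega : ¬ k + 2 = 0), if_neg (by omega : ¬ k + 1 = 0),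
        e1, e2, sub_self]
    have hagree : ∀ k, k < K → ∀ ω : Ω,
        dEv μ (fun n : ℕ => F (min n (K + 1))) f (k + 2) ω = dEv μ F f (k + 2) ω := by
      intro k hk ω
      show condEv μ _ f (k + 2) ω - condEv μ _ f (k + 1) ω
        = condEv μ F f (k + 2) ω - condEv μ F f (k + 1) ω
      have e1 : min (k + 2) (K + 1) = k + 2 := by omega
      have e2 : min (k + 1) (K + 1) = k + 1 := by omega
      simp only [condEv, e1, e2]
    have hsum' : ∑ k ∈ Finset.range K, ∫⁻ ω, ENNReal.ofReal (‖dEv μ F f (k + 1 + 1) ω‖ ^ q) ∂μ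
        ≤ (2 : ℝ≥0∞) ^ q * (2 * ENNReal.ofReal (Real.exp 2) ^ q * ENNReal.ofReal c ^ q + 1) *
          ∫⁻ ω, ENNReal.ofReal (‖f ω‖ ^ q) ∂μ := by
      rcases Nat.eq_zero_or_pos K with hK0 | hKpos
      · subst hK0
        simp only [Finset.range_zero, Finset.sum_empty]
        exact zero_le
      · have hblock := key_block (X := X) hq hc f H' (fun n : ℕ => F (min n (K + 1)))
          hF'le hF'm K hKpos hstop
        calc ∑ k ∈ Finset.range K, ∫⁻ ω, ENNReal.ofReal (‖dEv μ F f (k + 1 + 1) ω‖ ^ q) ∂μ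
            = ∑ k ∈ Finset.range K, ∫⁻ ω, ENNReal.ofReal
                (‖dEv μ (fun n : ℕ => F (min n (K + 1))) f (k + 2) ω‖ ^ q) ∂μ := by
              refine Finset.sum_congr rfl fun k hk => lintegral_congr fun ω => ?_
              rw [show dEv μ F f (k + 1 + 1) ω
                = dEv μ (fun n : ℕ => F (min n (K + 1))) f (k + 2) ω from
                (hagree k (Finset.mem_range.mp hk) ω).symm]
          _ ≤ _ := hblock
    calc (∑ k ∈ Finset.range K, ∫⁻ ω, ENNReal.ofReal (‖dEv μ F f (k + 1 + 1) ω‖ ^ q) ∂μ)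
          + ∫⁻ ω, ENNReal.ofReal (‖dEv μ F f (0 + 1) ω‖ ^ q) ∂μ
        ≤ ((2 : ℝ≥0∞) ^ q * (2 * ENNReal.ofReal (Real.exp 2) ^ q * ENNReal.ofReal c ^ q + 1) *
            ∫⁻ ω, ENNReal.ofReal (‖f ω‖ ^ q) ∂μ)
          + (2 : ℝ≥0∞) ^ q * (2 * ENNReal.ofReal (Real.exp 2) ^ q * ENNReal.ofReal c ^ q + 1) *
            ∫⁻ ω, ENNReal.ofReal (‖f ω‖ ^ q) ∂μ := add_le_add hsum' hterm0
      _ = ENNReal.ofReal (2 * (2 ^ q * (2 * Real.exp 2 ^ q * c ^ q + 1))) *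
            ∫⁻ ω, ENNReal.ofReal (‖f ω‖ ^ q) ∂μ := by
          rw [hofB]
          ring
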